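/- arXiv:2601.21355 — 4 statements merged into one kernel-verified Lean document; each statement's English description precedes it below -/
import Mathlib

section
/- Let θ̂⁺ = θ̂ − γ ∑_{i=1}^n (π_i/(n y_i)) ∇f_i(θ_i), where θ̂ = ∑_{i=1}^n π_i θ_i. Then F(θ̂⁺) − F(θ̂) ≤ (−γ/2 + γ²L)‖∇F(θ̂)‖² + (γ²L + γ/2)·(2/n)∑_{i=1}^n (ε/y_i)²‖∇f_i(θ_i)‖² + (γ²L + γ/2)·(2L²/n)∑_{i=1}^n ‖θ_i − θ̂‖². -/
open BigOperators

section Aux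

variable {E : Type*} [NormedAddCommGroup E] [InnerProductSpace ℝ E] [CompleteSpace E]

lemma fderiv_eq_inner_gradient {F : E → ℝ} (hF : Differentiable ℝ F) (x v : E) :
    fderiv ℝ F x v = inner ℝ (gradient F x) v := by
  have h := (hF x).hasGradientAt
  rw [hasGradientAt_iff_hasFDerivAt] at h
  rw [h.fderiv]; simp

lemma descent_lemma {F : E → ℝ} {L : ℝ} (hF : Differentiable ℝ F)
    (hLip : ∀ a b, ‖gradient F a - gradient F b‖ ≤ L * ‖a - b‖) (x v : E) :
    F (x + v) ≤ F x + inner ℝ (gradient F x) v + L / 2 * ‖v‖ ^ 2 := by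
  set φ : ℝ → ℝ := fun t => F (x + t • v) - t * inner ℝ (gradient F x) v
      - t ^ 2 * (L / 2 * ‖v‖ ^ 2) with hφ
  have hd : ∀ t : ℝ, HasDerivAt φ
      ((inner ℝ (gradient F (x + t • v)) v : ℝ) - inner ℝ (gradient F x) v - t * (L * ‖v‖ ^ 2)) t := by
    intro t
    have hc : HasDerivAt (fun t : ℝ => x + t • v) v t := by
      simpa using ((hasDerivAt_id t).smul_const v).const_add x
    have h1 : HasDerivAt (fun t : ℝ => F (x + t • v)) (fderiv ℝ F (x + t • v) v) t :=
      (hF _).hasFDerivAt.comp_hasDerivAt t hc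
    rw [fderiv_eq_inner_gradient hF] at h1
    have h2 : HasDerivAt (fun t : ℝ => t * (inner ℝ (gradient F x) v : ℝ))
        (inner ℝ (gradient F x) v : ℝ) t := by
      simpa using (hasDerivAt_id t).mul_const (inner ℝ (gradient F x) v : ℝ)
    have h3 : HasDerivAt (fun t : ℝ => t ^ 2 * (L / 2 * ‖v‖ ^ 2)) (t * (L * ‖v‖ ^ 2)) t := by
      have := (hasDerivAt_pow 2 t).mul_const (L / 2 * ‖v‖ ^ 2)
      convert this using 1
      · rfl
      · rfl
      ring
    exact (h1.sub h2).sub h3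
  have key : φ 1 ≤ φ 0 := by
    have hmono : AntitoneOn φ (Set.Icc (0:ℝ) 1) := by
      apply antitoneOn_of_deriv_nonpos (convex_Icc (0:ℝ) 1)
      · exact (fun t _ => (hd t).differentiableAt.continuousAt.continuousWithinAt)
      · intro t ht
        exact ((hd t).differentiableAt).differentiableWithinAt
      · intro t ht
        rw [interior_Icc] at ht
        rw [(hd t).deriv]
        have h1 : (inner ℝ (gradient F (x + t • v)) v : ℝ) - inner ℝ (gradient F x) v
            = inner ℝ (gradient F (x + t • v) - gradient F x) v := by
          rw [inner_sub_left]
        have h2 : (inner ℝ (gradient F (x + t • v) - gradient F x) v : ℝ)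
            ≤ ‖gradient F (x + t • v) - gradient F x‖ * ‖v‖ := real_inner_le_norm _ _
        have h3 : ‖gradient F (x + t • v) - gradient F x‖ ≤ L * ‖t • v‖ := by
          simpa using hLip (x + t • v) x
        have h4 : ‖t • v‖ = t * ‖v‖ := by
          rw [norm_smul, Real.norm_eq_abs, abs_of_pos ht.1]
        have h5 : ‖gradient F (x + t • v) - gradient F x‖ * ‖v‖ ≤ L * (t * ‖v‖) * ‖v‖ :=
          mul_le_mul_of_nonneg_right (h4 ▸ h3) (norm_nonneg v)
        nlinarith [h5, h1, h2]
    exact hmono (by norm_num) (by norm_num) (by norm_num)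
  simp only [hφ] at key
  norm_num [-inner_gradient_left] at key
  linarith

lemma gradient_avg {n : ℕ} (f : Fin n → E → ℝ) (hdiff : ∀ i, Differentiable ℝ (f i)) (x : E) :
    gradient (fun x => (1/(n:ℝ)) * ∑ i, f i x) x = (1/(n:ℝ)) • ∑ i, gradient (f i) x := by
  have hi : ∀ i : Fin n, HasFDerivAt (f i)
      (InnerProductSpace.toDual ℝ E (gradient (f i) x)) x := fun i => by
    have := (hdiff i x).hasGradientAt
    rwa [hasGradientAt_iff_hasFDerivAt] at this
  have hsum : HasFDerivAt (fun x => ∑ i, f i x)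
      (∑ i, InnerProductSpace.toDual ℝ E (gradient (f i) x)) x :=
    HasFDerivAt.fun_sum (fun i _ => hi i)
  have h2 := hsum.const_mul (1/(n:ℝ))
  have h3 : HasGradientAt (fun x => (1/(n:ℝ)) * ∑ i, f i x)
      ((1/(n:ℝ)) • ∑ i, gradient (f i) x) x := by
    rw [hasGradientAt_iff_hasFDerivAt, map_smul, map_sum]
    exact h2
  exact h3.gradient

lemma sq_add_le {x X Y : ℝ} (hx : 0 ≤ x) (h : x ≤ X + Y) : x^2 ≤ 2*X^2 + 2*Y^2 := by
  nlinarith [sq_nonneg (X - Y), sq_nonneg (X + Y), sq_nonneg x]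

end Aux

set_option maxHeartbeats 1000000

/-- Descent inequality for the weighted average iterate of Di-DGD:
with `θ̂ = ∑ π_i θ_i` and `θ̂⁺ = θ̂ − γ ∑ (π_i/(n y_i)) ∇f_i(θ_i)`,
`F(θ̂⁺) − F(θ̂) ≤ (−γ/2 + γ²L)‖∇F(θ̂)‖² + (γ²L + γ/2)(2/n)∑ (ε/y_i)²‖∇f_i(θ_i)‖²
  + (γ²L + γ/2)(2L²/n)∑ ‖θ_i − θ̂‖²`. -/
theorem stmt_6 (n d : ℕ) (hn : 1 ≤ n) (hd : 1 ≤ d) (L : ℝ)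
    (f : Fin n → EuclideanSpace ℝ (Fin d) → ℝ)
    (hdiff : ∀ i, Differentiable ℝ (f i))
    (hLip : ∀ i x z, ‖gradient (f i) x - gradient (f i) z‖ ≤ L * ‖x - z‖)
    (θ : Fin n → EuclideanSpace ℝ (Fin d))
    (π : Fin n → ℝ) (hπ_pos : ∀ i, 0 < π i) (hπ_sum : ∑ i, π i = 1)
    (y : Fin n → ℝ) (hy : ∀ i, 0 < y i)
    (ε : ℝ) (hε : 0 ≤ ε) (hyπ : ∀ i, |y i - π i| ≤ ε)
    (γ : ℝ) (hγ : 0 < γ) :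
    let F : EuclideanSpace ℝ (Fin d) → ℝ := fun x => (1 / (n : ℝ)) * ∑ i, f i x
    let θhat : EuclideanSpace ℝ (Fin d) := ∑ i, π i • θ i
    let θplus : EuclideanSpace ℝ (Fin d) :=
      θhat - γ • ∑ i, (π i / ((n : ℝ) * y i)) • gradient (f i) (θ i)
    F θplus - F θhat ≤ (-γ / 2 + γ ^ 2 * L) * ‖gradient F θhat‖ ^ 2
      + (γ ^ 2 * L + γ / 2) * (2 / (n : ℝ))
          * ∑ i, (ε / y i) ^ 2 * ‖gradient (f i) (θ i)‖ ^ 2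
      + (γ ^ 2 * L + γ / 2) * (2 * L ^ 2 / (n : ℝ)) * ∑ i, ‖θ i - θhat‖ ^ 2 := by
  intro F θhat θplus
  have hn0 : (0:ℝ) < (n:ℝ) := by exact_mod_cast hn
  -- L is nonnegative
  have hL0 : 0 ≤ L := by
    have i0 : Fin n := ⟨0, hn⟩
    have h := hLip i0 (EuclideanSpace.single (⟨0, hd⟩ : Fin d) (1:ℝ)) 0
    have hone : ‖(EuclideanSpace.single (⟨0, hd⟩ : Fin d) (1:ℝ)) - 0‖ = 1 := by
      simp [EuclideanSpace.norm_single]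
    rw [hone, mul_one] at h
    exact le_trans (norm_nonneg _) h
  -- differentiability of F
  have hFdiff : Differentiable ℝ F := by
    have : Differentiable ℝ (fun x : EuclideanSpace ℝ (Fin d) => ∑ i, f i x) :=
      Differentiable.fun_sum (fun i _ => hdiff i)
    exact this.const_mul _
  -- gradient of F
  have hgradF : ∀ x : EuclideanSpace ℝ (Fin d),
      gradient F x = (1/(n:ℝ)) • ∑ i, gradient (f i) x := fun x => gradient_avg f hdiff x
  -- Lipschitz gradient of F
  have hLipF : ∀ a b : EuclideanSpace ℝ (Fin d),
      ‖gradient F a - gradient F b‖ ≤ L * ‖a - b‖ := by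
    intro a b
    rw [hgradF a, hgradF b, ← smul_sub, ← Finset.sum_sub_distrib]
    rw [norm_smul, Real.norm_eq_abs, abs_of_pos (by positivity : (0:ℝ) < 1/(n:ℝ))]
    have h1 : ‖∑ i, (gradient (f i) a - gradient (f i) b)‖ ≤ (n:ℝ) * (L * ‖a - b‖) := by
      calc ‖∑ i, (gradient (f i) a - gradient (f i) b)‖
          ≤ ∑ i, ‖gradient (f i) a - gradient (f i) b‖ := norm_sum_le _ _
        _ ≤ ∑ _i : Fin n, L * ‖a - b‖ := Finset.sum_le_sum (fun i _ => hLip i a b)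
        _ = (n:ℝ) * (L * ‖a - b‖) := by simp [Finset.sum_const, mul_comm]
    calc 1/(n:ℝ) * ‖∑ i, (gradient (f i) a - gradient (f i) b)‖
        ≤ 1/(n:ℝ) * ((n:ℝ) * (L * ‖a - b‖)) :=
          mul_le_mul_of_nonneg_left h1 (by positivity)
      _ = L * ‖a - b‖ := by field_simp
  set g : EuclideanSpace ℝ (Fin d) := ∑ i, (π i / ((n : ℝ) * y i)) • gradient (f i) (θ i)
    with hg
  set G : EuclideanSpace ℝ (Fin d) := gradient F θhat with hG
  set e : EuclideanSpace ℝ (Fin d) := g - G with he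
  have hge : g = G + e := by rw [he]; abel
  -- descent lemma applied
  have hdesc : F θplus ≤ F θhat + inner ℝ G (-(γ • g)) + L / 2 * ‖-(γ • g)‖ ^ 2 := by
    have : θplus = θhat + (-(γ • g)) := by
      show θhat - γ • g = θhat + (-(γ • g))
      abel
    rw [this]
    exact descent_lemma hFdiff hLipF θhat (-(γ • g))
  have hinner : (inner ℝ G (-(γ • g)) : ℝ) = -γ * (‖G‖^2 + inner ℝ G e) := by
    rw [inner_neg_right, real_inner_smul_right, hge, inner_add_right, real_inner_self_eq_norm_sq]
    ring
  have hnormv : ‖-(γ • g)‖ ^ 2 = γ^2 * ‖g‖^2 := by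
    rw [norm_neg, norm_smul, Real.norm_eq_abs, abs_of_pos hγ, mul_pow]
  -- bound inner ℝ G e
  have hie : -(inner ℝ G e : ℝ) ≤ (‖G‖^2 + ‖e‖^2) / 2 := by
    have h1 : (inner ℝ G (-e) : ℝ) ≤ ‖G‖ * ‖-e‖ := real_inner_le_norm _ _
    rw [inner_neg_right, norm_neg] at h1
    nlinarith [sq_nonneg (‖G‖ - ‖e‖)]
  -- bound ‖g‖²
  have hng : ‖g‖^2 ≤ 2*‖G‖^2 + 2*‖e‖^2 := by
    have h1 : ‖g‖ ≤ ‖G‖ + ‖e‖ := by rw [hge]; exact norm_add_le _ _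
    nlinarith [norm_nonneg g, norm_nonneg G, norm_nonneg e, sq_nonneg (‖G‖ - ‖e‖)]
  -- step 1 : main descent bound
  have hstep1 : F θplus - F θhat ≤ (-γ/2 + γ^2*L) * ‖G‖^2 + (γ^2*L + γ/2) * ‖e‖^2 := by
    have h2 : L / 2 * (γ^2 * ‖g‖^2) ≤ L / 2 * (γ^2 * (2*‖G‖^2 + 2*‖e‖^2)) := by
      apply mul_le_mul_of_nonneg_left _ (by linarith)
      exact mul_le_mul_of_nonneg_left hng (by positivity)
    rw [hinner, hnormv] at hdesc
    have h7 := mul_le_mul_of_nonneg_left hie hγ.le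
    linarith [hdesc, h2, h7]
  -- bound on ‖e‖²
  set w : Fin n → EuclideanSpace ℝ (Fin d) :=
    fun i => (π i / y i) • gradient (f i) (θ i) - gradient (f i) θhat with hw
  have hew : e = (1/(n:ℝ)) • ∑ i, w i := by
    have hgsum : g = (1/(n:ℝ)) • ∑ i, (π i / y i) • gradient (f i) (θ i) := by
      rw [hg, Finset.smul_sum]
      refine Finset.sum_congr rfl (fun i _ => ?_)
      rw [smul_smul]
      congr 1
      field_simp
    rw [he, hgsum, hG, hgradF, ← smul_sub, ← Finset.sum_sub_distrib]
  have hwi : ∀ i, ‖w i‖^2 ≤ 2*(ε/y i)^2*‖gradient (f i) (θ i)‖^2 + 2*L^2*‖θ i - θhat‖^2 := by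
    intro i
    have hyi := hy i
    have hcoef : |π i / y i - 1| ≤ ε / y i := by
      rw [div_sub_one (ne_of_gt hyi), abs_div, abs_of_pos hyi]
      exact (div_le_div_iff_of_pos_right hyi).mpr (by rw [abs_sub_comm]; exact hyπ i)
    have hwsplit : w i = (π i / y i - 1) • gradient (f i) (θ i)
        + (gradient (f i) (θ i) - gradient (f i) θhat) := by
      rw [hw]
      simp only [sub_smul, one_smul]
      abel
    have hX : ‖(π i / y i - 1) • gradient (f i) (θ i)‖ ≤ ε / y i * ‖gradient (f i) (θ i)‖ := by
      rw [norm_smul, Real.norm_eq_abs]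
      exact mul_le_mul_of_nonneg_right hcoef (norm_nonneg _)
    have hY : ‖gradient (f i) (θ i) - gradient (f i) θhat‖ ≤ L * ‖θ i - θhat‖ :=
      hLip i (θ i) θhat
    have h1 : ‖w i‖ ≤ ε / y i * ‖gradient (f i) (θ i)‖ + L * ‖θ i - θhat‖ := by
      rw [hwsplit]
      exact (norm_add_le _ _).trans (add_le_add hX hY)
    have h2 := sq_add_le (norm_nonneg (w i)) h1
    calc ‖w i‖^2 ≤ 2*(ε / y i * ‖gradient (f i) (θ i)‖)^2 + 2*(L * ‖θ i - θhat‖)^2 := h2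
      _ = 2*(ε/y i)^2*‖gradient (f i) (θ i)‖^2 + 2*L^2*‖θ i - θhat‖^2 := by ring
  have hB : ‖e‖^2 ≤ (2/(n:ℝ)) * ∑ i, (ε/y i)^2*‖gradient (f i) (θ i)‖^2
      + (2*L^2/(n:ℝ)) * ∑ i, ‖θ i - θhat‖^2 := by
    have h1 : ‖∑ i, w i‖^2 ≤ (n:ℝ) * ∑ i, ‖w i‖^2 := by
      have ha : ‖∑ i, w i‖^2 ≤ (∑ i, ‖w i‖)^2 :=
        pow_le_pow_left₀ (norm_nonneg _) (norm_sum_le _ _) 2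
      have hb : (∑ i, ‖w i‖)^2 ≤ (n:ℝ) * ∑ i, ‖w i‖^2 := by
        simpa using sq_sum_le_card_mul_sum_sq (s := Finset.univ) (f := fun i => ‖w i‖)
      exact ha.trans hb
    have h2 : ∑ i, ‖w i‖^2
        ≤ 2 * ∑ i, (ε/y i)^2*‖gradient (f i) (θ i)‖^2 + 2*L^2 * ∑ i, ‖θ i - θhat‖^2 := by
      calc ∑ i, ‖w i‖^2
          ≤ ∑ i, (2*(ε/y i)^2*‖gradient (f i) (θ i)‖^2 + 2*L^2*‖θ i - θhat‖^2) :=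
            Finset.sum_le_sum (fun i _ => hwi i)
        _ = 2 * ∑ i, (ε/y i)^2*‖gradient (f i) (θ i)‖^2 + 2*L^2 * ∑ i, ‖θ i - θhat‖^2 := by
            rw [Finset.sum_add_distrib, Finset.mul_sum, Finset.mul_sum]
            congr 1 <;> exact Finset.sum_congr rfl (fun i _ => by ring)
    have h3 : ‖e‖^2 = (1/(n:ℝ))^2 * ‖∑ i, w i‖^2 := by
      rw [hew, norm_smul, Real.norm_eq_abs, abs_of_pos (by positivity : (0:ℝ) < 1/(n:ℝ)), mul_pow]
    rw [h3]
    have h4 : (1/(n:ℝ))^2 * ‖∑ i, w i‖^2 ≤ (1/(n:ℝ))^2 * ((n:ℝ) * ∑ i, ‖w i‖^2) :=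
      mul_le_mul_of_nonneg_left h1 (by positivity)
    have h5 : (1/(n:ℝ))^2 * ((n:ℝ) * ∑ i, ‖w i‖^2) = (1/(n:ℝ)) * ∑ i, ‖w i‖^2 := by
      field_simp
    have h6 : (1/(n:ℝ)) * ∑ i, ‖w i‖^2
        ≤ (1/(n:ℝ)) * (2 * ∑ i, (ε/y i)^2*‖gradient (f i) (θ i)‖^2
            + 2*L^2 * ∑ i, ‖θ i - θhat‖^2) := mul_le_mul_of_nonneg_left h2 (by positivity)
    calc (1/(n:ℝ))^2 * ‖∑ i, w i‖^2
        ≤ (1/(n:ℝ)) * ∑ i, ‖w i‖^2 := by rw [← h5]; exact h4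
      _ ≤ (1/(n:ℝ)) * (2 * ∑ i, (ε/y i)^2*‖gradient (f i) (θ i)‖^2
            + 2*L^2 * ∑ i, ‖θ i - θhat‖^2) := h6
      _ = (2/(n:ℝ)) * ∑ i, (ε/y i)^2*‖gradient (f i) (θ i)‖^2
            + (2*L^2/(n:ℝ)) * ∑ i, ‖θ i - θhat‖^2 := by ring
  -- combine
  have hC : 0 ≤ γ^2*L + γ/2 := by positivity
  have hfinal := mul_le_mul_of_nonneg_left hB hC
  linarith [hstep1, hfinal]
end

section
/- For every θ̂ ∈ ℝ^d: ‖∑_{i=1}^n (π_i/(n y_i)) ∇f_i(θ_i) − ∇F(θ̂)‖² ≤ (2/n)∑_{i=1}^n (ε/y_i)²‖∇f_i(θ_i)‖² + (2L²/n)∑_{i=1}^n ‖θ_i − θ̂‖². -/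
open BigOperators

/-- Gradient approximation bound: for every `θ̂ ∈ ℝ^d`,
`‖∑ (π_i/(n y_i)) ∇f_i(θ_i) − ∇F(θ̂)‖² ≤ (2/n)∑ (ε/y_i)²‖∇f_i(θ_i)‖²
  + (2L²/n)∑ ‖θ_i − θ̂‖²`. -/
theorem stmt_8 (n d : ℕ) (hn : 1 ≤ n) (hd : 1 ≤ d) (L : ℝ)
    (f : Fin n → EuclideanSpace ℝ (Fin d) → ℝ)
    (hdiff : ∀ i, Differentiable ℝ (f i))
    (hLip : ∀ i x z, ‖gradient (f i) x - gradient (f i) z‖ ≤ L * ‖x - z‖)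
    (θ : Fin n → EuclideanSpace ℝ (Fin d))
    (π : Fin n → ℝ)
    (y : Fin n → ℝ) (hy : ∀ i, 0 < y i)
    (ε : ℝ) (hε : 0 ≤ ε) (hyπ : ∀ i, |y i - π i| ≤ ε) :
    let F : EuclideanSpace ℝ (Fin d) → ℝ := fun x => (1 / (n : ℝ)) * ∑ i, f i x
    ∀ θhat : EuclideanSpace ℝ (Fin d),
      ‖(∑ i, (π i / ((n : ℝ) * y i)) • gradient (f i) (θ i)) - gradient F θhat‖ ^ 2
        ≤ (2 / (n : ℝ)) * ∑ i, (ε / y i) ^ 2 * ‖gradient (f i) (θ i)‖ ^ 2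
          + (2 * L ^ 2 / (n : ℝ)) * ∑ i, ‖θ i - θhat‖ ^ 2 := by
  intro F θhat
  have hn' : (0:ℝ) < n := by exact_mod_cast hn
  set g : Fin n → EuclideanSpace ℝ (Fin d) := fun i => gradient (f i) (θ i) with hg
  set h : Fin n → EuclideanSpace ℝ (Fin d) := fun i => gradient (f i) θhat with hh
  -- gradient of F
  have hF : gradient F θhat = (1/(n:ℝ)) • ∑ i, h i := by
    have hGA : HasGradientAt F ((1/(n:ℝ)) • ∑ i, h i) θhat := by
      rw [hasGradientAt_iff_hasFDerivAt]
      have hfd : ∀ i ∈ Finset.univ, HasFDerivAt (f i)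
          ((InnerProductSpace.toDual ℝ (EuclideanSpace ℝ (Fin d))) (h i)) θhat := fun i _ =>
        hasGradientAt_iff_hasFDerivAt.mp ((hdiff i θhat).hasGradientAt)
      have hsum := HasFDerivAt.sum hfd
      have hsm := hsum.const_mul (1/(n:ℝ))
      have heq : F = fun x => (1/(n:ℝ)) * ∑ i, f i x := rfl
      rw [heq]
      convert hsm using 1
      · rfl
      · funext x; simp [Finset.sum_apply]
      · simp [map_smul, map_sum, smul_comm]
    exact hGA.gradient
  -- split the vector
  set A : EuclideanSpace ℝ (Fin d) := ∑ i, ((π i - y i)/((n:ℝ) * y i)) • g i with hA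
  set B : EuclideanSpace ℝ (Fin d) := ∑ i, (1/(n:ℝ)) • (g i - h i) with hB
  have hsplit : (∑ i, (π i / ((n:ℝ) * y i)) • g i) - gradient F θhat = A + B := by
    rw [hF, Finset.smul_sum, hA, hB, ← Finset.sum_sub_distrib, ← Finset.sum_add_distrib]
    congr 1; funext i
    have hyi := (hy i).ne'
    have : π i / ((n:ℝ) * y i) = (π i - y i)/((n:ℝ) * y i) + 1/(n:ℝ) := by
      field_simp; ring
    rw [this, add_smul, smul_sub]
    abel
  rw [hsplit]
  -- bound A
  have hAbound : ‖A‖^2 ≤ (1/(n:ℝ)) * ∑ i, (ε / y i)^2 * ‖g i‖^2 := by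
    have h1 : ‖A‖ ≤ ∑ i, (ε/((n:ℝ) * y i)) * ‖g i‖ := by
      refine (norm_sum_le _ _).trans (Finset.sum_le_sum fun i _ => ?_)
      rw [norm_smul]
      apply mul_le_mul_of_nonneg_right _ (norm_nonneg _)
      rw [Real.norm_eq_abs, abs_div, abs_of_pos (mul_pos hn' (hy i))]
      gcongr
      · exact (mul_pos hn' (hy i)).le
      · rw [abs_sub_comm]; exact hyπ i
    have h2 : (∑ i, (ε/((n:ℝ) * y i)) * ‖g i‖)^2
        ≤ (n:ℝ) * ∑ i, ((ε/((n:ℝ) * y i)) * ‖g i‖)^2 := by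
      have := sq_sum_le_card_mul_sum_sq (s := Finset.univ)
        (f := fun i : Fin n => (ε/((n:ℝ) * y i)) * ‖g i‖)
      simpa using this
    have h3 : ‖A‖^2 ≤ (n:ℝ) * ∑ i, ((ε/((n:ℝ) * y i)) * ‖g i‖)^2 :=
      le_trans (by apply pow_le_pow_left₀ (norm_nonneg _) h1) h2
    calc ‖A‖^2 ≤ (n:ℝ) * ∑ i, ((ε/((n:ℝ) * y i)) * ‖g i‖)^2 := h3
      _ = (1/(n:ℝ)) * ∑ i, (ε / y i)^2 * ‖g i‖^2 := by
          rw [Finset.mul_sum, Finset.mul_sum]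
          congr 1; funext i
          have := (hy i).ne'
          field_simp
  -- bound B
  have hBbound : ‖B‖^2 ≤ (L^2/(n:ℝ)) * ∑ i, ‖θ i - θhat‖^2 := by
    have h1 : ‖B‖ ≤ ∑ i, (1/(n:ℝ)) * (L * ‖θ i - θhat‖) := by
      refine (norm_sum_le _ _).trans (Finset.sum_le_sum fun i _ => ?_)
      rw [norm_smul, Real.norm_eq_abs, abs_of_pos (by positivity)]
      exact mul_le_mul_of_nonneg_left (hLip i (θ i) θhat) (by positivity)
    have h1' : 0 ≤ ∑ i, (1/(n:ℝ)) * (L * ‖θ i - θhat‖) :=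
      le_trans (norm_nonneg B) h1
    have h2 : (∑ i, (1/(n:ℝ)) * (L * ‖θ i - θhat‖))^2
        ≤ (n:ℝ) * ∑ i, ((1/(n:ℝ)) * (L * ‖θ i - θhat‖))^2 := by
      have := sq_sum_le_card_mul_sum_sq (s := Finset.univ)
        (f := fun i : Fin n => (1/(n:ℝ)) * (L * ‖θ i - θhat‖))
      simpa using this
    have h3 : ‖B‖^2 ≤ (n:ℝ) * ∑ i, ((1/(n:ℝ)) * (L * ‖θ i - θhat‖))^2 :=
      le_trans (by apply pow_le_pow_left₀ (norm_nonneg _) h1) h2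
    calc ‖B‖^2 ≤ (n:ℝ) * ∑ i, ((1/(n:ℝ)) * (L * ‖θ i - θhat‖))^2 := h3
      _ = (L^2/(n:ℝ)) * ∑ i, ‖θ i - θhat‖^2 := by
          rw [Finset.mul_sum, Finset.mul_sum]
          congr 1; funext i
          field_simp
  -- combine
  have hab : ‖A + B‖^2 ≤ 2*‖A‖^2 + 2*‖B‖^2 := by
    have h1 := norm_add_le A B
    nlinarith [norm_nonneg A, norm_nonneg B, sq_nonneg (‖A‖ - ‖B‖), norm_nonneg (A+B)]
  calc ‖A + B‖^2 ≤ 2*‖A‖^2 + 2*‖B‖^2 := hab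
    _ ≤ 2*((1/(n:ℝ)) * ∑ i, (ε / y i)^2 * ‖g i‖^2)
        + 2*((L^2/(n:ℝ)) * ∑ i, ‖θ i - θhat‖^2) := by
        gcongr
    _ = (2 / (n:ℝ)) * ∑ i, (ε / y i)^2 * ‖g i‖^2
        + (2 * L^2 / (n:ℝ)) * ∑ i, ‖θ i - θhat‖^2 := by ring
end

section
/- Let Θ ∈ ℝ^{n×d} have rows θ_1, …, θ_n, let 𝐆 ∈ ℝ^{n×d} stack ∇f_1(θ_1), …, ∇f_n(θ_n) as rows, let Ỹ = Diag(y_1, …, y_n) with y_i > 0, let D = ∑_{i=1}^n 1/y_i², let θ̂ = ∑_{i=1}^n π_i θ_i, and define the update Θ⁺ = AΘ − (γ/n)Ỹ^{-1}𝐆. If 0 < γ ≤ nρ/(4L√(C_{π1}D)), then (1/n)‖(I_n − 𝟙πᵀ)Θ⁺‖_F² ≤ (1 − ρ/2)·(1/n)‖(I_n − 𝟙πᵀ)Θ‖_F² + (4 C_{π1} D/(n²ρ)) γ² ς² + (2 C_{π1} D/(n³ρ)) γ² ‖∇F(θ̂)‖², where C_{π1} = ∑_{i=1}^n [(1−π_i)²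 + (n−1)π_i²]. -/
set_option maxHeartbeats 600000

open BigOperators

lemma euclid_sum_apply {ι : Type*} {d : ℕ} (s : Finset ι) (w : ι → EuclideanSpace ℝ (Fin d))
    (k : Fin d) : (∑ j ∈ s, w j) k = ∑ j ∈ s, w j k := by
  induction s using Finset.cons_induction with
  | empty => rfl
  | cons a s ha ih => rw [Finset.sum_cons, Finset.sum_cons, ← ih]; rfl

lemma enorm_sq {d : ℕ} (x : EuclideanSpace ℝ (Fin d)) : ‖x‖ ^ 2 = ∑ i, (x i) ^ 2 := by
  rw [EuclideanSpace.norm_eq, Real.sq_sqrt (by positivity)]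
  simp [Real.norm_eq_abs, sq_abs]

lemma comb_norm_sq {d n : ℕ} (b : Fin n → ℝ) (w : Fin n → EuclideanSpace ℝ (Fin d)) :
    ‖∑ j, b j • w j‖ ^ 2 ≤ (∑ j, (b j) ^ 2) * ∑ j, ‖w j‖ ^ 2 := by
  have h1 : ‖∑ j, b j • w j‖ ≤ ∑ j, |b j| * ‖w j‖ := by
    refine (norm_sum_le _ _).trans ?_
    refine Finset.sum_le_sum fun j _ => ?_
    rw [norm_smul, Real.norm_eq_abs]
  calc ‖∑ j, b j • w j‖ ^ 2 ≤ (∑ j, |b j| * ‖w j‖) ^ 2 := by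
        apply sq_le_sq' _ h1
        nlinarith [norm_nonneg (∑ j, b j • w j), Finset.sum_nonneg
          (fun j (_ : j ∈ Finset.univ) => mul_nonneg (abs_nonneg (b j)) (norm_nonneg (w j)))]
    _ ≤ (∑ j, |b j| ^ 2) * ∑ j, ‖w j‖ ^ 2 := Finset.sum_mul_sq_le_sq_mul_sq _ _ _
    _ = (∑ j, (b j) ^ 2) * ∑ j, ‖w j‖ ^ 2 := by simp [sq_abs]

lemma cross_sum {d n : ℕ} (u v : Fin n → EuclideanSpace ℝ (Fin d)) :
    ∑ i, ‖u i + v i‖ ^ 2 ≤ (∑ i, ‖u i‖ ^ 2)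
      + 2 * Real.sqrt ((∑ i, ‖u i‖ ^ 2) * (∑ i, ‖v i‖ ^ 2)) + ∑ i, ‖v i‖ ^ 2 := by
  have h1 : ∑ i, ‖u i + v i‖ ^ 2
      ≤ ∑ i, (‖u i‖ ^ 2 + 2 * (‖u i‖ * ‖v i‖) + ‖v i‖ ^ 2) :=
    Finset.sum_le_sum fun i _ => by
      nlinarith [norm_add_le (u i) (v i), norm_nonneg (u i + v i), norm_nonneg (u i),
        norm_nonneg (v i)]
  rw [Finset.sum_add_distrib, Finset.sum_add_distrib, ← Finset.mul_sum] at h1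
  have h2 : ∑ i, ‖u i‖ * ‖v i‖ ≤ Real.sqrt ((∑ i, ‖u i‖ ^ 2) * (∑ i, ‖v i‖ ^ 2)) := by
    rw [Real.le_sqrt (Finset.sum_nonneg fun i _ => mul_nonneg (norm_nonneg _) (norm_nonneg _))]
    · exact Finset.sum_mul_sq_le_sq_mul_sq _ _ _
    · positivity
  linarith

lemma sqrt_mul_le_half (x y : ℝ) (hx : 0 ≤ x) (hy : 0 ≤ y) :
    Real.sqrt (x * y) ≤ (x + y) / 2 := by
  have h := Real.sqrt_le_sqrt
    (show x * y ≤ ((x + y) / 2) ^ 2 by nlinarith [sq_nonneg (x - y)])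
  rwa [Real.sqrt_sq (by positivity)] at h

lemma gamma_bound (nn ρ L γ CD : ℝ) (hρ0 : 0 < ρ) (hL : 0 < L) (hγ1 : 0 < γ)
    (hCD : 0 ≤ CD) (hγ2 : γ ≤ nn * ρ / (4 * L * Real.sqrt CD)) :
    16 * γ ^ 2 * L ^ 2 * CD ≤ nn ^ 2 * ρ ^ 2 := by
  rcases hCD.lt_or_eq with h | h
  · have hs : 0 < Real.sqrt CD := Real.sqrt_pos.2 h
    have h4Ls : 0 < 4 * L * Real.sqrt CD :=
      mul_pos (mul_pos (by norm_num : (0:ℝ) < 4) hL) hs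
    have hb : γ * (4 * L * Real.sqrt CD) ≤ nn * ρ := by
      rw [← le_div_iff₀ h4Ls]
      exact hγ2
    have hb0 : 0 ≤ γ * (4 * L * Real.sqrt CD) := mul_nonneg hγ1.le h4Ls.le
    have hsq := pow_le_pow_left₀ hb0 hb 2
    have hss : Real.sqrt CD ^ 2 = CD := Real.sq_sqrt hCD
    nlinarith [hsq, hss]
  · exfalso
    rw [← h, Real.sqrt_zero, mul_zero, div_zero] at hγ2
    linarith

lemma contract_bound (ρ E2 V2 S2 T : ℝ) (hρ0 : 0 < ρ) (hρ1 : ρ ≤ 1)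
    (hE : 0 ≤ E2) (hV : 0 ≤ V2) (hS : S2 ≤ (1 - ρ) ^ 2 * E2)
    (hcross : T ≤ S2 + 2 * Real.sqrt (S2 * V2) + V2) :
    T ≤ (1 - ρ) * E2 + V2 / ρ := by
  have hsqrtb : Real.sqrt (S2 * V2) ≤ (1 - ρ) * ((ρ * E2 + V2 / ρ) / 2) := by
    calc Real.sqrt (S2 * V2) ≤ Real.sqrt (((1 - ρ) ^ 2 * E2) * V2) :=
          Real.sqrt_le_sqrt (mul_le_mul_of_nonneg_right hS hV)
      _ = (1 - ρ) * Real.sqrt (E2 * V2) := by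
          rw [mul_assoc, Real.sqrt_mul (sq_nonneg _), Real.sqrt_sq (by linarith)]
      _ ≤ (1 - ρ) * ((ρ * E2 + V2 / ρ) / 2) := by
          apply mul_le_mul_of_nonneg_left _ (by linarith)
          have hEV : E2 * V2 = (ρ * E2) * (V2 / ρ) := by
            rw [mul_comm ρ E2, mul_assoc, mul_comm ρ (V2 / ρ),
              div_mul_cancel₀ _ (ne_of_gt hρ0)]
          rw [hEV]
          exact sqrt_mul_le_half _ _ (mul_nonneg hρ0.le hE) (div_nonneg hV hρ0.le)
  have hexp : (1 - ρ) ^ 2 * E2 + 2 * ((1 - ρ) * ((ρ * E2 + V2 / ρ) / 2)) + V2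
      = (1 - ρ) * E2 + V2 / ρ := by
    field_simp
    ring
  nlinarith [hcross, hsqrtb]

lemma final_num (nn ρ Cπ1 D L γ ς H E2 T : ℝ)
    (hn : 1 ≤ nn) (hρ0 : 0 < ρ)
    (hC : 0 ≤ Cπ1) (hD : 0 ≤ D) (hE : 0 ≤ E2)
    (hγL : 16 * γ ^ 2 * L ^ 2 * (Cπ1 * D) ≤ nn ^ 2 * ρ ^ 2)
    (hT : T ≤ (1 - ρ) * E2 + Cπ1 * (γ ^ 2 / nn ^ 2
      * (7 * L ^ 2 * D * E2 + 7 / 2 * D * ς ^ 2 + 7 / 4 * D * H ^ 2)) / ρ) :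
    1 / nn * T ≤ (1 - ρ / 2) * (1 / nn * E2) + 4 * Cπ1 * D / (nn ^ 2 * ρ) * γ ^ 2 * ς ^ 2
      + 2 * Cπ1 * D / (nn ^ 3 * ρ) * γ ^ 2 * H ^ 2 := by
  have hn0 : 0 < nn := by linarith
  have h1 : 1 / nn * T ≤ 1 / nn * ((1 - ρ) * E2 + Cπ1 * (γ ^ 2 / nn ^ 2
      * (7 * L ^ 2 * D * E2 + 7 / 2 * D * ς ^ 2 + 7 / 4 * D * H ^ 2)) / ρ) :=
    mul_le_mul_of_nonneg_left hT (by positivity)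
  refine h1.trans ?_
  rw [← sub_nonneg]
  have hkey : 0 ≤ (nn ^ 2 * ρ ^ 2 - 16 * γ ^ 2 * L ^ 2 * (Cπ1 * D)) * E2 :=
    mul_nonneg (by linarith) hE
  have h2 : 0 ≤ Cπ1 * D * γ ^ 2 * ς ^ 2 :=
    mul_nonneg (mul_nonneg (mul_nonneg hC hD) (sq_nonneg γ)) (sq_nonneg ς)
  have h3 : 0 ≤ Cπ1 * D * γ ^ 2 * H ^ 2 :=
    mul_nonneg (mul_nonneg (mul_nonneg hC hD) (sq_nonneg γ)) (sq_nonneg H)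
  have e1 : (1 - ρ / 2) * (1 / nn * E2) + 4 * Cπ1 * D / (nn ^ 2 * ρ) * γ ^ 2 * ς ^ 2
      + 2 * Cπ1 * D / (nn ^ 3 * ρ) * γ ^ 2 * H ^ 2
      - 1 / nn * ((1 - ρ) * E2 + Cπ1 * (γ ^ 2 / nn ^ 2
        * (7 * L ^ 2 * D * E2 + 7 / 2 * D * ς ^ 2 + 7 / 4 * D * H ^ 2)) / ρ)
      = ((nn ^ 2 * ρ ^ 2 / 2 - 7 * γ ^ 2 * L ^ 2 * (Cπ1 * D)) * E2
        + (4 * nn - 7 / 2) * (Cπ1 * D * γ ^ 2 * ς ^ 2)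
        + (1 / 4) * (Cπ1 * D * γ ^ 2 * H ^ 2)) / (nn ^ 3 * ρ) := by
    field_simp
    ring
  rw [e1]
  have hpos : (0:ℝ) < nn ^ 3 * ρ := by positivity
  apply div_nonneg _ (le_of_lt hpos)
  have hX : 0 ≤ γ ^ 2 * L ^ 2 * (Cπ1 * D) * E2 := by positivity
  nlinarith [mul_nonneg h2 (sub_nonneg.2 hn), hkey, hX, h3]

/-- Consensus-error contraction for one Di-DGD step
`Θ⁺ = AΘ − (γ/n)Ỹ⁻¹𝐆`.  Row `i` of `Θ⁺` is
`∑_j A_{ij} θ_j − (γ/(n y_i))∇f_i(θ_i)`, and since `πᵀ𝟙 = 1`, row `i` of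
`(I − 𝟙πᵀ)Θ` is `θ_i − θ̂` with `θ̂ = ∑_j π_j θ_j`, so the squared Frobenius norms
are sums of squared Euclidean norms of these rows.  The spectral-norm hypothesis
`‖A − 𝟙πᵀ‖₂ ≤ 1 − ρ` is expressed as `‖(A − 𝟙πᵀ)x‖² ≤ (1−ρ)²‖x‖²` for all `x`. -/
theorem stmt_11 (n d : ℕ) (hn : 1 ≤ n) (hd : 1 ≤ d)
    (A : Matrix (Fin n) (Fin n) ℝ) (π : Fin n → ℝ) (ρ : ℝ)
    (hρ0 : 0 < ρ) (hρ1 : ρ ≤ 1)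
    (hA_row : ∀ i, ∑ j, A i j = 1)
    (hπ_left : ∀ j, ∑ i, π i * A i j = π j)
    (hπ_sum : ∑ i, π i = 1)
    (hspec : ∀ x : Fin n → ℝ,
      ∑ i, (∑ j, (A i j - π j) * x j) ^ 2 ≤ (1 - ρ) ^ 2 * ∑ i, (x i) ^ 2)
    (L ς : ℝ) (hL : 0 < L)
    (f : Fin n → EuclideanSpace ℝ (Fin d) → ℝ)
    (hdiff : ∀ i, Differentiable ℝ (f i))
    (hLip : ∀ i x z, ‖gradient (f i) x - gradient (f i) z‖ ≤ L * ‖x - z‖)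
    (hhet : ∀ i x,
      ‖gradient (fun z => (1 / (n : ℝ)) * ∑ j, f j z) x - gradient (f i) x‖ ≤ ς)
    (θ : Fin n → EuclideanSpace ℝ (Fin d))
    (y : Fin n → ℝ) (hy : ∀ i, 0 < y i)
    (γ : ℝ) :
    let F : EuclideanSpace ℝ (Fin d) → ℝ := fun x => (1 / (n : ℝ)) * ∑ i, f i x
    let θhat : EuclideanSpace ℝ (Fin d) := ∑ i, π i • θ i
    let D : ℝ := ∑ i, 1 / (y i) ^ 2
    let Cπ1 : ℝ := ∑ i, ((1 - π i) ^ 2 + ((n : ℝ) - 1) * (π i) ^ 2)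
    let θplus : Fin n → EuclideanSpace ℝ (Fin d) := fun i =>
      (∑ j, A i j • θ j) - (γ / ((n : ℝ) * y i)) • gradient (f i) (θ i)
    0 < γ → γ ≤ (n : ℝ) * ρ / (4 * L * Real.sqrt (Cπ1 * D)) →
    (1 / (n : ℝ)) * ∑ i, ‖θplus i - ∑ j, π j • θplus j‖ ^ 2
      ≤ (1 - ρ / 2) * ((1 / (n : ℝ)) * ∑ i, ‖θ i - θhat‖ ^ 2)
        + (4 * Cπ1 * D / ((n : ℝ) ^ 2 * ρ)) * γ ^ 2 * ς ^ 2
        + (2 * Cπ1 * D / ((n : ℝ) ^ 3 * ρ)) * γ ^ 2 * ‖gradient F θhat‖ ^ 2 := by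
  intro F θhat D Cπ1 θplus hγ1 hγ2
  have hFdef : F = fun x => (1 / (n : ℝ)) * ∑ i, f i x := rfl
  have hθhatdef : θhat = ∑ i, π i • θ i := rfl
  have hDdef : D = ∑ i, 1 / (y i) ^ 2 := rfl
  have hCdef : Cπ1 = ∑ i, ((1 - π i) ^ 2 + ((n : ℝ) - 1) * (π i) ^ 2) := rfl
  have hθplusdef : θplus = fun i =>
      (∑ j, A i j • θ j) - (γ / ((n : ℝ) * y i)) • gradient (f i) (θ i) := rfl
  set g : Fin n → EuclideanSpace ℝ (Fin d) := fun i => gradient (f i) (θ i) with hg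
  set c : Fin n → ℝ := fun i => γ / ((n : ℝ) * y i) with hc
  set e : Fin n → EuclideanSpace ℝ (Fin d) := fun i => θ i - θhat with he
  set u : Fin n → EuclideanSpace ℝ (Fin d) := fun i => ∑ j, (A i j - π j) • e j with hu
  set v : Fin n → EuclideanSpace ℝ (Fin d) :=
    fun i => (∑ j, (π j * c j) • g j) - c i • g i with hv
  set H : ℝ := ‖gradient F θhat‖ with hH
  set E2 : ℝ := ∑ i, ‖e i‖ ^ 2 with hE2
  set V2 : ℝ := ∑ i, ‖v i‖ ^ 2 with hV2
  set S2 : ℝ := ∑ i, ‖u i‖ ^ 2 with hS2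
  have hn1 : (1:ℝ) ≤ (n:ℝ) := by exact_mod_cast hn
  have hn0 : (0:ℝ) < (n:ℝ) := by linarith
  have hE2nn : 0 ≤ E2 := by rw [hE2]; exact Finset.sum_nonneg fun i _ => sq_nonneg _
  have hV2nn : 0 ≤ V2 := by rw [hV2]; exact Finset.sum_nonneg fun i _ => sq_nonneg _
  have hCnn : 0 ≤ Cπ1 := by
    rw [hCdef]
    exact Finset.sum_nonneg fun i _ =>
      add_nonneg (sq_nonneg _) (mul_nonneg (by linarith) (sq_nonneg _))
  have hDpos : 0 < D := by
    rw [hDdef]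
    have : Nonempty (Fin n) := ⟨⟨0, hn⟩⟩
    exact Finset.sum_pos (fun i _ => one_div_pos.mpr (pow_pos (hy i) 2)) Finset.univ_nonempty
  -- the row identity
  have hrow : ∀ i, θplus i - ∑ j, π j • θplus j = u i + v i := by
    intro i
    simp only [hθplusdef, hu, hv, he, hc, hg]
    have h1 : ∑ j, π j • ((∑ k, A j k • θ k) - (γ / ((n:ℝ) * y j)) • gradient (f j) (θ j))
        = θhat - ∑ j, (π j * (γ / ((n:ℝ) * y j))) • gradient (f j) (θ j) := by
      simp only [smul_sub, Finset.sum_sub_distrib]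
      congr 1
      · calc ∑ j, π j • ∑ k, A j k • θ k
            = ∑ j, ∑ k, (π j * A j k) • θ k := Finset.sum_congr rfl fun j _ => by
              rw [Finset.smul_sum]
              exact Finset.sum_congr rfl fun k _ => smul_smul _ _ _
          _ = ∑ k, ∑ j, (π j * A j k) • θ k := Finset.sum_comm
          _ = ∑ k, (∑ j, π j * A j k) • θ k :=
              Finset.sum_congr rfl fun k _ => (Finset.sum_smul).symm
          _ = ∑ k, π k • θ k := Finset.sum_congr rfl fun k _ => by rw [hπ_left k]
          _ = θhat := hθhatdef.symm
      · exact Finset.sum_congr rfl fun j _ => smul_smul _ _ _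
    have h2 : ∑ j, (A i j - π j) • (θ j - θhat) = (∑ j, A i j • θ j) - θhat := by
      simp only [sub_smul, smul_sub, Finset.sum_sub_distrib]
      rw [← Finset.sum_smul, ← Finset.sum_smul, hA_row i, hπ_sum, one_smul, ← hθhatdef]
      abel
    rw [h1, h2]
    abel
  -- spectral bound
  have hS : S2 ≤ (1 - ρ) ^ 2 * E2 := by
    have hcomp : ∀ i (k : Fin d), u i k = ∑ j, (A i j - π j) * (e j k) := by
      intro i k
      simp only [hu]
      rw [euclid_sum_apply]
      rfl
    calc S2 = ∑ i, ∑ k, (u i k) ^ 2 := by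
          rw [hS2]; exact Finset.sum_congr rfl fun i _ => enorm_sq (u i)
      _ = ∑ k, ∑ i, (∑ j, (A i j - π j) * (e j k)) ^ 2 := by
          rw [Finset.sum_comm]
          exact Finset.sum_congr rfl fun k _ =>
            Finset.sum_congr rfl fun i _ => by rw [hcomp]
      _ ≤ ∑ k, ((1 - ρ) ^ 2 * ∑ j, (e j k) ^ 2) :=
          Finset.sum_le_sum fun k _ => hspec _
      _ = (1 - ρ) ^ 2 * ∑ j, ∑ k, (e j k) ^ 2 := by
          rw [← Finset.mul_sum, Finset.sum_comm]
      _ = (1 - ρ) ^ 2 * E2 := by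
          rw [hE2]
          congr 1
          exact Finset.sum_congr rfl fun j _ => (enorm_sq (e j)).symm
  -- variance bound via Cauchy–Schwarz
  have hvalt : ∀ i, v i = ∑ j, (π j - if i = j then 1 else 0) • (c j • g j) := by
    intro i
    simp only [hv, sub_smul, Finset.sum_sub_distrib]
    congr 1
    · exact Finset.sum_congr rfl fun j _ => (smul_smul _ _ _).symm
    · simp [ite_smul, Finset.sum_ite_eq]
  have hVW : V2 ≤ Cπ1 * ∑ j, (c j) ^ 2 * ‖g j‖ ^ 2 := by
    calc V2 = ∑ i, ‖∑ j, (π j - if i = j then 1 else 0) • (c j • g j)‖ ^ 2 := by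
          rw [hV2]; exact Finset.sum_congr rfl fun i _ => by rw [hvalt i]
      _ ≤ ∑ i, ((∑ j, (π j - if i = j then 1 else 0) ^ 2) * ∑ j, ‖c j • g j‖ ^ 2) :=
          Finset.sum_le_sum fun i _ => comb_norm_sq _ _
      _ = (∑ i, ∑ j, (π j - if i = j then 1 else 0) ^ 2) * ∑ j, ‖c j • g j‖ ^ 2 :=
          (Finset.sum_mul _ _ _).symm
      _ = Cπ1 * ∑ j, (c j) ^ 2 * ‖g j‖ ^ 2 := by
          congr 1
          · rw [Finset.sum_comm, hCdef]
            refine Finset.sum_congr rfl fun j _ => ?_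
            have hsplit : ∀ i : Fin n, (π j - if i = j then (1:ℝ) else 0) ^ 2
                = (π j) ^ 2 + (if i = j then ((π j - 1) ^ 2 - (π j) ^ 2) else 0) := by
              intro i
              by_cases h : i = j <;> simp [h] <;> ring
            rw [Finset.sum_congr rfl fun i _ => hsplit i, Finset.sum_add_distrib,
              Finset.sum_const, Finset.sum_ite_eq' Finset.univ j
                (fun _ => ((π j - 1) ^ 2 - (π j) ^ 2))]
            simp [Finset.card_univ, nsmul_eq_mul]
            ring
          · exact Finset.sum_congr rfl fun j _ => by
              rw [norm_smul, mul_pow, Real.norm_eq_abs, sq_abs]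
  -- gradient bound
  have hς0 : 0 ≤ ς := (norm_nonneg _).trans (hhet ⟨0, hn⟩ θhat)
  have hH0 : 0 ≤ H := by rw [hH]; exact norm_nonneg _
  have hgb : ∀ j, ‖g j‖ ^ 2 ≤ 7 * L ^ 2 * ‖e j‖ ^ 2 + 7 / 2 * ς ^ 2 + 7 / 4 * H ^ 2 := by
    intro j
    have t1 : ‖g j - gradient (f j) θhat‖ ≤ L * ‖e j‖ := by
      simp only [hg, he]
      exact hLip j (θ j) θhat
    have t2 : ‖gradient (f j) θhat - gradient F θhat‖ ≤ ς := by
      rw [norm_sub_rev, hFdef]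
      exact hhet j θhat
    have t3 : ‖g j‖ ≤ L * ‖e j‖ + ς + H := by
      have h0 : g j = (g j - gradient (f j) θhat)
          + (gradient (f j) θhat - gradient F θhat) + gradient F θhat := by abel
      calc ‖g j‖ = ‖(g j - gradient (f j) θhat)
            + (gradient (f j) θhat - gradient F θhat) + gradient F θhat‖ := by rw [← h0]
        _ ≤ ‖g j - gradient (f j) θhat‖ + ‖gradient (f j) θhat - gradient F θhat‖
            + ‖gradient F θhat‖ :=
            (norm_add_le _ _).trans (add_le_add (norm_add_le _ _) le_rfl)
        _ ≤ L * ‖e j‖ + ς + H := by rw [hH]; exact add_le_add (add_le_add t1 t2) le_rfl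
    have t4 : ‖g j‖ ^ 2 ≤ (L * ‖e j‖ + ς + H) ^ 2 := by
      have := pow_le_pow_left₀ (norm_nonneg (g j)) t3 2
      exact this
    nlinarith [sq_nonneg (2 * (L * ‖e j‖) - ς), sq_nonneg (2 * ς - H),
      sq_nonneg (4 * (L * ‖e j‖) - H)]
  -- bound on the weighted gradient sum
  have hW : ∑ j, (c j) ^ 2 * ‖g j‖ ^ 2
      ≤ γ ^ 2 / (n:ℝ) ^ 2 * (7 * L ^ 2 * D * E2 + 7 / 2 * D * ς ^ 2 + 7 / 4 * D * H ^ 2) := by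
    have hcsq : ∀ j, (c j) ^ 2 = γ ^ 2 / (n:ℝ) ^ 2 * (1 / (y j) ^ 2) := by
      intro j
      simp only [hc]
      have hyj : (y j) ≠ 0 := (hy j).ne'
      field_simp
    have hyD : ∀ j, 1 / (y j) ^ 2 ≤ D := by
      intro j
      rw [hDdef]
      exact Finset.single_le_sum (f := fun i => 1 / (y i) ^ 2)
        (fun i _ => by positivity) (Finset.mem_univ j)
    have step1 : ∑ j, (c j) ^ 2 * ‖g j‖ ^ 2
        ≤ ∑ j, γ ^ 2 / (n:ℝ) ^ 2 * (1 / (y j) ^ 2)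
            * (7 * L ^ 2 * ‖e j‖ ^ 2 + 7 / 2 * ς ^ 2 + 7 / 4 * H ^ 2) := by
      refine Finset.sum_le_sum fun j _ => ?_
      rw [hcsq j]
      exact mul_le_mul_of_nonneg_left (hgb j) (by positivity)
    refine step1.trans ?_
    have step2 : ∑ j, γ ^ 2 / (n:ℝ) ^ 2 * (1 / (y j) ^ 2)
          * (7 * L ^ 2 * ‖e j‖ ^ 2 + 7 / 2 * ς ^ 2 + 7 / 4 * H ^ 2)
        = γ ^ 2 / (n:ℝ) ^ 2 * (7 * L ^ 2 * (∑ j, (1 / (y j) ^ 2) * ‖e j‖ ^ 2)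
            + 7 / 2 * ς ^ 2 * (∑ j, 1 / (y j) ^ 2) + 7 / 4 * H ^ 2 * (∑ j, 1 / (y j) ^ 2)) := by
      simp only [Finset.mul_sum, mul_add, Finset.sum_add_distrib]
      congr 1
      · congr 1
        · exact Finset.sum_congr rfl fun j _ => by ring
        · exact Finset.sum_congr rfl fun j _ => by ring
      · exact Finset.sum_congr rfl fun j _ => by ring
    rw [step2, ← hDdef]
    have hsumE : ∑ j, (1 / (y j) ^ 2) * ‖e j‖ ^ 2 ≤ D * E2 := by
      calc ∑ j, (1 / (y j) ^ 2) * ‖e j‖ ^ 2 ≤ ∑ j, D * ‖e j‖ ^ 2 :=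
            Finset.sum_le_sum fun j _ =>
              mul_le_mul_of_nonneg_right (hyD j) (sq_nonneg _)
        _ = D * E2 := by rw [hE2, Finset.mul_sum]
    apply mul_le_mul_of_nonneg_left _ (by positivity)
    have hc7 := mul_le_mul_of_nonneg_left hsumE (show (0:ℝ) ≤ 7 * L ^ 2 by positivity)
    linarith [hc7]
  -- step-size bound
  have hγL : 16 * γ ^ 2 * L ^ 2 * (Cπ1 * D) ≤ (n:ℝ) ^ 2 * ρ ^ 2 :=
    gamma_bound (n:ℝ) ρ L γ (Cπ1 * D) hρ0 hL hγ1 (mul_nonneg hCnn hDpos.le) hγ2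
  -- combine the cross term
  have hS2nn0 : S2 ≤ (1 - ρ) ^ 2 * E2 := hS
  have hT : ∑ i, ‖u i + v i‖ ^ 2 ≤ (1 - ρ) * E2 + V2 / ρ := by
    have hcross := cross_sum u v
    rw [← hS2, ← hV2] at hcross
    exact contract_bound ρ E2 V2 S2 _ hρ0 hρ1 hE2nn hV2nn hS hcross
  have hVfinal : V2 ≤ Cπ1 * (γ ^ 2 / (n:ℝ) ^ 2
      * (7 * L ^ 2 * D * E2 + 7 / 2 * D * ς ^ 2 + 7 / 4 * D * H ^ 2)) :=
    hVW.trans (mul_le_mul_of_nonneg_left hW hCnn)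
  have hTfinal : ∑ i, ‖u i + v i‖ ^ 2 ≤ (1 - ρ) * E2 + Cπ1 * (γ ^ 2 / (n:ℝ) ^ 2
      * (7 * L ^ 2 * D * E2 + 7 / 2 * D * ς ^ 2 + 7 / 4 * D * H ^ 2)) / ρ := by
    refine hT.trans ?_
    have hdiv := (div_le_div_iff_of_pos_right hρ0).2 hVfinal
    linarith
  have hTsum : ∑ i, ‖θplus i - ∑ j, π j • θplus j‖ ^ 2 = ∑ i, ‖u i + v i‖ ^ 2 :=
    Finset.sum_congr rfl fun i _ => by rw [hrow i]
  rw [hTsum]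
  exact final_num (n:ℝ) ρ Cπ1 D L γ ς H E2 _ hn1 hρ0 hCnn hDpos.le hE2nn hγL hTfinal
end

section
/- Define the Lyapunov function L_k = F(θ̂^k) + (3γ_k L²/(nρ))‖Θ^k − Θ̂^k‖_F². There exist λ ∈ [0,1) and a finite constant c ≥ 0 (depending only on n, L, G, A, π and ρ) such that for every stepsize sequence with 0 < γ_k ≤ 1/(4L), the Di-DGD iterates satisfy for all k ≥ 0: L_{k+1} ≤ L_k − (γ_k/4)‖∇F(θ̂^k)‖² − (3γ_k L²(2−ρ)/(2nρ))‖Θ^k − Θ̂^k‖_F² + (3γ_{k+1} L²/(nρ))‖Θ^{k+1} − Θ̂^{k+1}‖_F² + c γ_k λ^{2k}. -/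
open Matrix BigOperators

open InnerProductSpace

section Aux

open InnerProductSpace

variable {E : Type*} [NormedAddCommGroup E] [InnerProductSpace ℝ E] [CompleteSpace E]

private lemma didgd_hasDerivAt_line (φ : E → ℝ) (hφ : Differentiable ℝ φ) (x v : E) (t : ℝ) :
    HasDerivAt (fun s : ℝ => φ (x + s • v)) (⟪gradient φ (x + t • v), v⟫_ℝ) t := by
  have h2 : HasDerivAt (fun s : ℝ => x + s • v) v t := by
    simpa using ((hasDerivAt_id t).smul_const v).const_add x
  have h1 : HasFDerivAt φ (toDual ℝ E (gradient φ (x + t • v))) (x + t • v) :=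
    (hφ (x + t • v)).hasGradientAt.hasFDerivAt
  have := h1.comp_hasDerivAt t h2
  simpa [toDual_apply_apply, Function.comp_def] using this

/-- Descent lemma for a function with Lipschitz gradient. -/
private lemma didgd_descent (φ : E → ℝ) (hφ : Differentiable ℝ φ) {L : ℝ}
    (hlip : ∀ x z, ‖gradient φ x - gradient φ z‖ ≤ L * ‖x - z‖) (x v : E) :
    φ (x + v) ≤ φ x + ⟪gradient φ x, v⟫_ℝ + L / 2 * ‖v‖ ^ 2 := by
  set ψ : ℝ → ℝ := fun t =>
    φ (x + t • v) - t * ⟪gradient φ x, v⟫_ℝ - L / 2 * t ^ 2 * ‖v‖ ^ 2 with hψ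
  have hd : ∀ t : ℝ, HasDerivAt ψ
      (⟪gradient φ (x + t • v), v⟫_ℝ - ⟪gradient φ x, v⟫_ℝ - L * t * ‖v‖ ^ 2) t := by
    intro t
    have h1 := didgd_hasDerivAt_line φ hφ x v t
    have h2 : HasDerivAt (fun s : ℝ => s * ⟪gradient φ x, v⟫_ℝ) (⟪gradient φ x, v⟫_ℝ) t := by
      simpa using (hasDerivAt_id t).mul_const (⟪gradient φ x, v⟫_ℝ)
    have h3 : HasDerivAt (fun s : ℝ => L / 2 * s ^ 2 * ‖v‖ ^ 2) (L * t * ‖v‖ ^ 2) t := by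
      have h4 : HasDerivAt (fun s : ℝ => s ^ 2) (2 * t) t := by
        simpa using hasDerivAt_pow 2 t
      have := (h4.const_mul (L / 2)).mul_const (‖v‖ ^ 2)
      rw [show L * t * ‖v‖ ^ 2 = L / 2 * (2 * t) * ‖v‖ ^ 2 by ring]
      exact this
    exact (h1.sub h2).sub h3
  have hmono : AntitoneOn ψ (Set.Icc (0 : ℝ) 1) := by
    apply antitoneOn_of_deriv_nonpos (convex_Icc 0 1)
    · exact fun t _ => ((hd t).differentiableAt).continuousAt.continuousWithinAt
    · exact fun t _ => ((hd t).differentiableAt).differentiableWithinAt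
    · intro t ht
      rw [interior_Icc] at ht
      rw [(hd t).deriv]
      have hb : ⟪gradient φ (x + t • v) - gradient φ x, v⟫_ℝ ≤ L * t * ‖v‖ ^ 2 := by
        calc ⟪gradient φ (x + t • v) - gradient φ x, v⟫_ℝ
            ≤ ‖gradient φ (x + t • v) - gradient φ x‖ * ‖v‖ :=
              real_inner_le_norm _ _
          _ ≤ (L * ‖(x + t • v) - x‖) * ‖v‖ :=
              mul_le_mul_of_nonneg_right (hlip _ _) (norm_nonneg _)
          _ = L * t * ‖v‖ ^ 2 := by
              rw [add_sub_cancel_left, norm_smul, Real.norm_eq_abs, abs_of_pos ht.1]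
              ring
      have := inner_sub_left (𝕜 := ℝ) (gradient φ (x + t • v)) (gradient φ x) v
      linarith [hb, this.le, this.symm.le]
  have h01 := hmono (Set.mem_Icc.2 ⟨le_refl 0, zero_le_one⟩)
    (Set.mem_Icc.2 ⟨zero_le_one, le_refl 1⟩) zero_le_one
  simp only [hψ, zero_smul, add_zero, one_smul, zero_mul, one_mul, zero_pow, one_pow,
    mul_zero, sub_zero, mul_one] at h01
  · linarith

private lemma didgd_hasGradientAt_const_mul_sum {ι : Type*} (s : Finset ι) (f : ι → E → ℝ)
    (g : ι → E) (c : ℝ) (x : E) (h : ∀ i ∈ s, HasGradientAt (f i) (g i) x) :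
    HasGradientAt (fun y => c * ∑ i ∈ s, f i y) (c • ∑ i ∈ s, g i) x := by
  have hf : HasFDerivAt (fun y => ∑ i ∈ s, f i y) (∑ i ∈ s, toDual ℝ E (g i)) x :=
    HasFDerivAt.fun_sum (fun i hi => (h i hi).hasFDerivAt)
  have h2 := hf.const_mul c
  rw [hasGradientAt_iff_hasFDerivAt]
  convert h2 using 1
  ext y
  simp [toDual_apply_apply, real_inner_smul_left, sum_inner, Finset.mul_sum]
  rw [map_smul, map_sum]

end Aux

set_option maxHeartbeats 1000000 in
/-- One-step Lyapunov inequality for Di-DGD with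
`L_k = F(θ̂^k) + (3γ_k L²/(nρ))‖Θ^k − Θ̂^k‖_F²`: there exist `λ ∈ [0,1)` and `c ≥ 0`
(depending only on the problem data, not on the stepsizes or iterates) such that for
every stepsize sequence with `0 < γ_k ≤ 1/(4L)` and every run of Di-DGD,
`L_{k+1} ≤ L_k − (γ_k/4)‖∇F(θ̂^k)‖² − (3γ_k L²(2−ρ)/(2nρ))‖Θ^k − Θ̂^k‖_F²
  + (3γ_{k+1} L²/(nρ))‖Θ^{k+1} − Θ̂^{k+1}‖_F² + c γ_k λ^{2k}`.
Since `Θ̂^k = 𝟙πᵀΘ^k` has every row equal to `θ̂^k = ∑_i π_i θ_i^k`, the squared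
Frobenius norm `‖Θ^k − Θ̂^k‖_F²` equals `∑_i ‖θ_i^k − θ̂^k‖²`. -/
theorem stmt_12 (n d : ℕ) (hn : 1 ≤ n) (hd : 1 ≤ d)
    (A : Matrix (Fin n) (Fin n) ℝ)
    (hA_nonneg : ∀ i j, 0 ≤ A i j)
    (hA_diag : ∀ i, 0 < A i i)
    (hA_row : ∀ i, ∑ j, A i j = 1)
    (hA_prim : ∃ m : ℕ, 1 ≤ m ∧ ∀ i j, 0 < (A ^ m) i j)
    (π : Fin n → ℝ)
    (hπ_pos : ∀ i, 0 < π i)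
    (hπ_left : ∀ j, ∑ i, π i * A i j = π j)
    (hπ_sum : ∑ i, π i = 1)
    (ρ : ℝ) (hρ0 : 0 < ρ) (hρ1 : ρ ≤ 1)
    (hspec : ∀ x : Fin n → ℝ,
      ∑ i, (∑ j, (A i j - π j) * x j) ^ 2 ≤ (1 - ρ) ^ 2 * ∑ i, (x i) ^ 2)
    (L G : ℝ) (hL : 0 < L)
    (f : Fin n → EuclideanSpace ℝ (Fin d) → ℝ)
    (hdiff : ∀ i, Differentiable ℝ (f i))
    (hLip : ∀ i x z, ‖gradient (f i) x - gradient (f i) z‖ ≤ L * ‖x - z‖)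
    (hbdd : ∀ i x, ‖gradient (f i) x‖ ≤ G) :
    ∃ lam : ℝ, 0 ≤ lam ∧ lam < 1 ∧ ∃ c : ℝ, 0 ≤ c ∧
      ∀ (γ : ℕ → ℝ), (∀ k, 0 < γ k) → (∀ k, γ k ≤ 1 / (4 * L)) →
      ∀ (θ : ℕ → Fin n → EuclideanSpace ℝ (Fin d))
        (Y : ℕ → Matrix (Fin n) (Fin n) ℝ),
        Y 0 = 1 → (∀ k, Y (k + 1) = A * Y k) →
        (∀ k i, θ (k + 1) i = (∑ j, A i j • θ k j)
            - (γ k / ((n : ℝ) * Y k i i)) • gradient (f i) (θ k i)) →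
        let F : EuclideanSpace ℝ (Fin d) → ℝ := fun x => (1 / (n : ℝ)) * ∑ i, f i x
        let θhat : ℕ → EuclideanSpace ℝ (Fin d) := fun k => ∑ i, π i • θ k i
        let cons : ℕ → ℝ := fun k => ∑ i, ‖θ k i - θhat k‖ ^ 2
        let Lyap : ℕ → ℝ := fun k =>
          F (θhat k) + (3 * γ k * L ^ 2 / ((n : ℝ) * ρ)) * cons k
        ∀ k : ℕ,
          Lyap (k + 1) ≤ Lyap k - (γ k / 4) * ‖gradient F (θhat k)‖ ^ 2
            - (3 * γ k * L ^ 2 * (2 - ρ) / (2 * (n : ℝ) * ρ)) * cons k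
            + (3 * γ (k + 1) * L ^ 2 / ((n : ℝ) * ρ)) * cons (k + 1)
            + c * γ k * lam ^ (2 * k) := by
  have hnpos : 0 < n := hn
  have hn0 : (0:ℝ) < n := by exact_mod_cast hnpos
  haveI : Nonempty (Fin n) := ⟨⟨0, hnpos⟩⟩
  set i0 : Fin n := ⟨0, hnpos⟩
  have hG0 : 0 ≤ G := le_trans (norm_nonneg _) (hbdd i0 0)
  have hlamnn : (0:ℝ) ≤ 1 - ρ := by linarith
  have hlamlt : (1:ℝ) - ρ < 1 := by linarith
  -- nonnegativity of matrix powers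
  have hpow_nonneg : ∀ (k : ℕ) i j, 0 ≤ (A ^ k) i j := by
    intro k
    induction k with
    | zero =>
      intro i j
      rw [pow_zero]
      by_cases h : i = j <;> simp [Matrix.one_apply, h]
    | succ k ih =>
      intro i j
      rw [pow_succ', Matrix.mul_apply]
      exact Finset.sum_nonneg fun l _ => mul_nonneg (hA_nonneg i l) (ih l j)
  -- π is a left eigenvector of all powers
  have hπpow : ∀ (k : ℕ) j, ∑ i, π i * (A ^ k) i j = π j := by
    intro k
    induction k with
    | zero =>
      intro j
      simp [Matrix.one_apply, mul_ite, mul_one, mul_zero, Finset.sum_ite_eq']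
    | succ k ih =>
      intro j
      calc ∑ i, π i * (A ^ (k+1)) i j
          = ∑ i, ∑ l, π i * A i l * (A ^ k) l j := by
            apply Finset.sum_congr rfl
            intro i _
            rw [pow_succ', Matrix.mul_apply, Finset.mul_sum]
            apply Finset.sum_congr rfl
            intro l _
            ring
        _ = ∑ l, (∑ i, π i * A i l) * (A ^ k) l j := by
            rw [Finset.sum_comm]
            apply Finset.sum_congr rfl
            intro l _
            rw [Finset.sum_mul]
        _ = ∑ l, π l * (A ^ k) l j := by
            apply Finset.sum_congr rfl
            intro l _
            rw [hπ_left l]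
        _ = π j := ih j
  -- column deviation bound
  have hπle1 : ∀ j, π j ≤ 1 := by
    intro j
    rw [← hπ_sum]
    exact Finset.single_le_sum (fun i _ => (hπ_pos i).le) (Finset.mem_univ j)
  have hcol : ∀ (k : ℕ) j, ∑ i, ((A ^ k) i j - π j) ^ 2 ≤ (n : ℝ) * ((1 - ρ) ^ k) ^ 2 := by
    intro k
    induction k with
    | zero =>
      intro j
      simp only [pow_zero]
      calc ∑ i, ((1 : Matrix (Fin n) (Fin n) ℝ) i j - π j) ^ 2
          ≤ ∑ _i : Fin n, (1:ℝ) := by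
            apply Finset.sum_le_sum
            intro i _
            have h1 : |(1 : Matrix (Fin n) (Fin n) ℝ) i j - π j| ≤ 1 := by
              rcases eq_or_ne i j with h | h
              · rw [h, Matrix.one_apply_eq, abs_le]
                constructor <;> linarith [hπ_pos j, hπle1 j]
              · rw [Matrix.one_apply_ne h, abs_le]
                constructor <;> linarith [hπ_pos j, hπle1 j]
            calc ((1 : Matrix (Fin n) (Fin n) ℝ) i j - π j) ^ 2
                = |(1 : Matrix (Fin n) (Fin n) ℝ) i j - π j| ^ 2 := (sq_abs _).symm
              _ ≤ 1 ^ 2 := by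
                  apply pow_le_pow_left₀ (abs_nonneg _) h1
              _ = 1 := one_pow 2
        _ = (n : ℝ) := by
            rw [Finset.sum_const, Finset.card_univ, Fintype.card_fin, nsmul_eq_mul, mul_one]
        _ ≤ (n : ℝ) * 1 ^ 2 := by norm_num
    | succ k ih =>
      intro j
      have hkey : ∀ i, (A ^ (k+1)) i i0 = (A ^ (k+1)) i i0 := fun _ => rfl
      have hiden : ∀ i, (A ^ (k+1)) i j - π j
          = ∑ l, (A i l - π l) * ((A ^ k) l j - π j) := by
        intro i
        have e1 : ∑ l, A i l * (A ^ k) l j = (A ^ (k+1)) i j := by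
          rw [pow_succ', Matrix.mul_apply]
        have e2 : ∑ l, A i l * π j = π j := by
          rw [← Finset.sum_mul, hA_row i, one_mul]
        have e3 : ∑ l, π l * (A ^ k) l j = π j := hπpow k j
        have e4 : ∑ l, π l * π j = π j := by
          rw [← Finset.sum_mul, hπ_sum, one_mul]
        have expand : ∑ l, (A i l - π l) * ((A ^ k) l j - π j)
            = (∑ l, A i l * (A ^ k) l j) - (∑ l, A i l * π j)
              - ((∑ l, π l * (A ^ k) l j) - ∑ l, π l * π j) := by
          rw [← Finset.sum_sub_distrib, ← Finset.sum_sub_distrib, ← Finset.sum_sub_distrib]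
          apply Finset.sum_congr rfl
          intro l _
          ring
        rw [expand, e1, e2, e3, e4]
        ring
      calc ∑ i, ((A ^ (k+1)) i j - π j) ^ 2
          = ∑ i, (∑ l, (A i l - π l) * ((A ^ k) l j - π j)) ^ 2 := by
            apply Finset.sum_congr rfl
            intro i _
            rw [hiden i]
        _ ≤ (1 - ρ) ^ 2 * ∑ l, ((A ^ k) l j - π j) ^ 2 := hspec _
        _ ≤ (1 - ρ) ^ 2 * ((n : ℝ) * ((1 - ρ) ^ k) ^ 2) := by
            apply mul_le_mul_of_nonneg_left (ih j) (sq_nonneg _)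
        _ = (n : ℝ) * ((1 - ρ) ^ (k+1)) ^ 2 := by ring
  -- diagonal deviation bound
  have hdiagdev : ∀ (k : ℕ) i, |(A ^ k) i i - π i| ≤ Real.sqrt n * (1 - ρ) ^ k := by
    intro k i
    have hterm : ((A ^ k) i i - π i) ^ 2 ≤ ∑ l, ((A ^ k) l i - π i) ^ 2 :=
      Finset.single_le_sum (f := fun l => ((A ^ k) l i - π i) ^ 2)
        (fun l _ => sq_nonneg _) (Finset.mem_univ i)
    have hsq : (Real.sqrt n * (1 - ρ) ^ k) ^ 2 = (n : ℝ) * ((1 - ρ) ^ k) ^ 2 := by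
      rw [mul_pow, Real.sq_sqrt hn0.le]
    have h1 : ((A ^ k) i i - π i) ^ 2 ≤ (Real.sqrt n * (1 - ρ) ^ k) ^ 2 := by
      rw [hsq]
      exact le_trans hterm (hcol k i)
    calc |(A ^ k) i i - π i| = Real.sqrt (((A ^ k) i i - π i) ^ 2) :=
          (Real.sqrt_sq_eq_abs _).symm
      _ ≤ Real.sqrt ((Real.sqrt n * (1 - ρ) ^ k) ^ 2) := Real.sqrt_le_sqrt h1
      _ = Real.sqrt n * (1 - ρ) ^ k := Real.sqrt_sq (by positivity)
  -- diagonal lower bound via A i i powers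
  have hdiaglb : ∀ (k : ℕ) i, (A i i) ^ k ≤ (A ^ k) i i := by
    intro k
    induction k with
    | zero => intro i; simp [Matrix.one_apply]
    | succ k ih =>
      intro i
      calc (A i i) ^ (k+1) = A i i * (A i i) ^ k := by ring
        _ ≤ A i i * (A ^ k) i i := by
            apply mul_le_mul_of_nonneg_left (ih i) (hA_diag i).le
        _ ≤ (A ^ (k+1)) i i := by
            rw [pow_succ', Matrix.mul_apply]
            exact Finset.single_le_sum (f := fun l => A i l * (A ^ k) l i)
              (fun l _ => mul_nonneg (hA_nonneg i l) (hpow_nonneg k l i)) (Finset.mem_univ i)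
  -- uniform lower bound on the diagonal of powers
  set pm : ℝ := Finset.univ.inf' Finset.univ_nonempty π with hpm_def
  have hpm_pos : 0 < pm := (Finset.lt_inf'_iff _).mpr fun i _ => hπ_pos i
  have hpm_le : ∀ i, pm ≤ π i := fun i => Finset.inf'_le _ (Finset.mem_univ i)
  set am : ℝ := Finset.univ.inf' Finset.univ_nonempty (fun i => A i i) with ham_def
  have ham_pos : 0 < am := (Finset.lt_inf'_iff _).mpr fun i _ => hA_diag i
  have ham_le : ∀ i, am ≤ A i i := fun i => Finset.inf'_le _ (Finset.mem_univ i)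
  have hAii_le1 : ∀ i, A i i ≤ 1 := by
    intro i
    rw [← hA_row i]
    exact Finset.single_le_sum (fun j _ => hA_nonneg i j) (Finset.mem_univ i)
  have ham_le1 : am ≤ 1 := le_trans (ham_le i0) (hAii_le1 i0)
  have hsqn : 0 < Real.sqrt n := Real.sqrt_pos.mpr hn0
  obtain ⟨K, hK⟩ := exists_pow_lt_of_lt_one
    (show (0:ℝ) < pm / (2 * Real.sqrt n) by positivity) hlamlt
  have hKbound : Real.sqrt n * (1 - ρ) ^ K ≤ pm / 2 := by
    have h1 : Real.sqrt n * (1 - ρ) ^ K ≤ Real.sqrt n * (pm / (2 * Real.sqrt n)) :=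
      mul_le_mul_of_nonneg_left hK.le hsqn.le
    have h2 : Real.sqrt n * (pm / (2 * Real.sqrt n)) = pm / 2 := by
      field_simp
    linarith
  set b : ℝ := min (pm / 2) (am ^ K) with hb_def
  have hb_pos : 0 < b := lt_min (by linarith) (pow_pos ham_pos K)
  have hYlb : ∀ (k : ℕ) i, b ≤ (A ^ k) i i := by
    intro k i
    rcases le_or_gt K k with h | h
    · have h1 : Real.sqrt n * (1 - ρ) ^ k ≤ pm / 2 :=
        le_trans (mul_le_mul_of_nonneg_left
          (pow_le_pow_of_le_one hlamnn hlamlt.le h) hsqn.le) hKbound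
      have h2 := (abs_le.mp (hdiagdev k i)).1
      have h3 := hpm_le i
      calc b ≤ pm / 2 := min_le_left _ _
        _ ≤ (A ^ k) i i := by linarith
    · calc b ≤ am ^ K := min_le_right _ _
        _ ≤ am ^ k := pow_le_pow_of_le_one ham_pos.le ham_le1 h.le
        _ ≤ (A i i) ^ k := pow_le_pow_left₀ ham_pos.le (ham_le i) k
        _ ≤ (A ^ k) i i := hdiaglb k i
  -- choose lam and c
  refine ⟨1 - ρ, hlamnn, hlamlt, 3 / 2 * G ^ 2 * (n : ℝ) / b ^ 2, by positivity, ?_⟩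
  intro γ hγpos hγle θ Y hY0 hYrec hθrec F θhat cons Lyap k
  have hYk : ∀ m, Y m = A ^ m := by
    intro m
    induction m with
    | zero => simpa using hY0
    | succ m ih => rw [hYrec, ih, ← pow_succ']
  -- gradient of F
  have hFgradAt : ∀ x : EuclideanSpace ℝ (Fin d),
      HasGradientAt F ((1 / (n : ℝ)) • ∑ i, gradient (f i) x) x := by
    intro x
    exact didgd_hasGradientAt_const_mul_sum Finset.univ f
      (fun i => gradient (f i) x) (1 / (n : ℝ)) x
      (fun i _ => ((hdiff i) x).hasGradientAt)
  have hFgrad : ∀ x : EuclideanSpace ℝ (Fin d),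
      gradient F x = (1 / (n : ℝ)) • ∑ i, gradient (f i) x :=
    fun x => (hFgradAt x).gradient
  have hFdiff : Differentiable ℝ F := fun x => ((hFgradAt x).differentiableAt)
  have hFlip : ∀ x z : EuclideanSpace ℝ (Fin d),
      ‖gradient F x - gradient F z‖ ≤ L * ‖x - z‖ := by
    intro x z
    rw [hFgrad x, hFgrad z, ← smul_sub, ← Finset.sum_sub_distrib]
    calc ‖(1 / (n : ℝ)) • ∑ i, (gradient (f i) x - gradient (f i) z)‖
        = (1 / (n : ℝ)) * ‖∑ i, (gradient (f i) x - gradient (f i) z)‖ := by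
          rw [norm_smul, Real.norm_eq_abs, abs_of_pos (by positivity)]
      _ ≤ (1 / (n : ℝ)) * ∑ i, ‖gradient (f i) x - gradient (f i) z‖ := by
          apply mul_le_mul_of_nonneg_left (norm_sum_le _ _) (by positivity)
      _ ≤ (1 / (n : ℝ)) * ∑ _i : Fin n, L * ‖x - z‖ := by
          apply mul_le_mul_of_nonneg_left _ (by positivity)
          exact Finset.sum_le_sum fun i _ => hLip i x z
      _ = L * ‖x - z‖ := by
          rw [Finset.sum_const, Finset.card_univ, Fintype.card_fin, nsmul_eq_mul]
          field_simp
  -- positivity of diagonal entries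
  have hYpos : ∀ i, 0 < (A ^ k) i i := fun i => lt_of_lt_of_le hb_pos (hYlb k i)
  -- the averaged iterate recursion
  set gi : Fin n → EuclideanSpace ℝ (Fin d) := fun i => gradient (f i) (θ k i) with hgi
  set u : EuclideanSpace ℝ (Fin d) :=
    ∑ i, (π i / ((n : ℝ) * (A ^ k) i i)) • gi i with hu
  have hstep : θhat (k+1) = θhat k - γ k • u := by
    show ∑ i, π i • θ (k+1) i = (∑ i, π i • θ k i) - γ k • u
    calc ∑ i, π i • θ (k+1) i
        = ∑ i, π i • ((∑ j, A i j • θ k j)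
            - (γ k / ((n : ℝ) * Y k i i)) • gradient (f i) (θ k i)) := by
          apply Finset.sum_congr rfl
          intro i _
          rw [hθrec k i]
      _ = (∑ i, ∑ j, (π i * A i j) • θ k j)
          - ∑ i, (π i * (γ k / ((n : ℝ) * (A ^ k) i i))) • gi i := by
          rw [← Finset.sum_sub_distrib]
          apply Finset.sum_congr rfl
          intro i _
          rw [smul_sub, Finset.smul_sum, hYk]
          congr 1
          · exact Finset.sum_congr rfl fun j _ => (smul_smul _ _ _)
          · rw [smul_smul]
      _ = (∑ j, π j • θ k j) - γ k • u := by
          congr 1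
          · rw [Finset.sum_comm]
            apply Finset.sum_congr rfl
            intro j _
            rw [← Finset.sum_smul, hπ_left j]
          · rw [hu, Finset.smul_sum]
            apply Finset.sum_congr rfl
            intro i _
            rw [smul_smul]
            congr 1
            ring
  -- descent step
  have hxplus : θhat k + (θhat (k+1) - θhat k) = θhat (k+1) := by abel
  have hdesc : F (θhat (k+1)) ≤ F (θhat k)
      + ⟪gradient F (θhat k), θhat (k+1) - θhat k⟫_ℝ
      + L / 2 * ‖θhat (k+1) - θhat k‖ ^ 2 := by
    have := didgd_descent F hFdiff hFlip (θhat k) (θhat (k+1) - θhat k)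
    rwa [hxplus] at this
  set D : EuclideanSpace ℝ (Fin d) := gradient F (θhat k) with hD
  set e : EuclideanSpace ℝ (Fin d) := u - D with he
  have hDu : u = D + e := by rw [he]; abel
  have hv : θhat (k+1) - θhat k = -(γ k • u) := by rw [hstep]; abel
  have hip : ⟪D, θhat (k+1) - θhat k⟫_ℝ = -(γ k * (‖D‖ ^ 2 + ⟪D, e⟫_ℝ)) := by
    rw [hv, inner_neg_right, real_inner_smul_right, hDu, inner_add_right,
      real_inner_self_eq_norm_sq]
  have hnv : ‖θhat (k+1) - θhat k‖ = γ k * ‖u‖ := by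
    rw [hv, norm_neg, norm_smul, Real.norm_eq_abs, abs_of_pos (hγpos k)]
  have hu_le : ‖u‖ ≤ ‖D‖ + ‖e‖ := by rw [hDu]; exact norm_add_le D e
  have hγL : γ k * (4 * L) ≤ 1 := (le_div_iff₀ (by positivity)).mp (hγle k)
  have hA1 : L / 2 * (γ k * ‖u‖) ^ 2 ≤ γ k / 8 * (‖D‖ + ‖e‖) ^ 2 := by
    have h1 : ‖u‖ ^ 2 ≤ (‖D‖ + ‖e‖) ^ 2 :=
      pow_le_pow_left₀ (norm_nonneg u) hu_le 2
    have h2 : γ k * L ≤ 1 / 4 := by linarith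
    calc L / 2 * (γ k * ‖u‖) ^ 2 = (γ k * L) * (γ k / 2 * ‖u‖ ^ 2) := by ring
      _ ≤ (1 / 4) * (γ k / 2 * (‖D‖ + ‖e‖) ^ 2) := by
          apply mul_le_mul h2 _ (mul_nonneg (by linarith [hγpos k]) (sq_nonneg _)) (by norm_num)
          apply mul_le_mul_of_nonneg_left h1 (by linarith [hγpos k])
      _ = γ k / 8 * (‖D‖ + ‖e‖) ^ 2 := by ring
  have hipDe : |⟪D, e⟫_ℝ| ≤ ‖D‖ * ‖e‖ := abs_real_inner_le_norm D e
  have hF1 : F (θhat (k+1)) ≤ F (θhat k) - γ k / 4 * ‖D‖ ^ 2 + 3 * γ k / 4 * ‖e‖ ^ 2 := by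
    have h0 := hdesc
    rw [hip, hnv] at h0
    have h5 : -(γ k * ⟪D, e⟫_ℝ) ≤ γ k * (‖D‖ * ‖e‖) := by
      have h51 : -⟪D, e⟫_ℝ ≤ ‖D‖ * ‖e‖ := by
        have := (abs_le.mp hipDe).1
        linarith only [this]
      calc -(γ k * ⟪D, e⟫_ℝ) = γ k * (-⟪D, e⟫_ℝ) := by ring
        _ ≤ γ k * (‖D‖ * ‖e‖) := mul_le_mul_of_nonneg_left h51 (hγpos k).le
    have h6 : γ k * (‖D‖ * ‖e‖) + γ k / 8 * (‖D‖ + ‖e‖) ^ 2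
        ≤ 3 * γ k / 4 * (‖D‖ ^ 2 + ‖e‖ ^ 2) := by
      have hsq : ‖D‖ * ‖e‖ + 1 / 8 * (‖D‖ + ‖e‖) ^ 2
          ≤ 3 / 4 * (‖D‖ ^ 2 + ‖e‖ ^ 2) := by
        nlinarith only [sq_nonneg (‖D‖ - ‖e‖)]
      calc γ k * (‖D‖ * ‖e‖) + γ k / 8 * (‖D‖ + ‖e‖) ^ 2
          = γ k * (‖D‖ * ‖e‖ + 1 / 8 * (‖D‖ + ‖e‖) ^ 2) := by ring
        _ ≤ γ k * (3 / 4 * (‖D‖ ^ 2 + ‖e‖ ^ 2)) :=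
            mul_le_mul_of_nonneg_left hsq (hγpos k).le
        _ = 3 * γ k / 4 * (‖D‖ ^ 2 + ‖e‖ ^ 2) := by ring
    linarith only [h0, hA1, h5, h6]
  -- decompose e
  set aa : EuclideanSpace ℝ (Fin d) :=
    ∑ i, (π i / ((n : ℝ) * (A ^ k) i i) - 1 / (n : ℝ)) • gi i with haa_def
  set bb : EuclideanSpace ℝ (Fin d) :=
    ∑ i, (1 / (n : ℝ)) • (gi i - gradient (f i) (θhat k)) with hbb_def
  have he_ab : e = aa + bb := by
    rw [he, hu, hD, hFgrad (θhat k), haa_def, hbb_def, Finset.smul_sum,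
      ← Finset.sum_sub_distrib, ← Finset.sum_add_distrib]
    apply Finset.sum_congr rfl
    intro i _
    rw [sub_smul, smul_sub]
    abel
  -- bound aa
  have haa : ‖aa‖ ≤ Real.sqrt n * (1 - ρ) ^ k * G / b := by
    calc ‖aa‖ ≤ ∑ i, ‖(π i / ((n : ℝ) * (A ^ k) i i) - 1 / (n : ℝ)) • gi i‖ :=
          norm_sum_le _ _
      _ ≤ ∑ _i : Fin n, Real.sqrt n * (1 - ρ) ^ k / ((n : ℝ) * b) * G := by
          apply Finset.sum_le_sum
          intro i _
          rw [norm_smul, Real.norm_eq_abs]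
          have hYi := hYpos i
          have hYbi := hYlb k i
          have hcoef : π i / ((n : ℝ) * (A ^ k) i i) - 1 / (n : ℝ)
              = (π i - (A ^ k) i i) / ((n : ℝ) * (A ^ k) i i) := by
            field_simp
          have hcoefb : |π i / ((n : ℝ) * (A ^ k) i i) - 1 / (n : ℝ)|
              ≤ Real.sqrt n * (1 - ρ) ^ k / ((n : ℝ) * b) := by
            rw [hcoef, abs_div, abs_of_pos (mul_pos hn0 hYi)]
            have hnum : |π i - (A ^ k) i i| ≤ Real.sqrt n * (1 - ρ) ^ k := by
              rw [abs_sub_comm]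
              exact hdiagdev k i
            apply div_le_div₀ (mul_nonneg (Real.sqrt_nonneg _) (pow_nonneg hlamnn k))
              hnum (mul_pos hn0 hb_pos)
            exact mul_le_mul_of_nonneg_left hYbi hn0.le
          exact mul_le_mul hcoefb (hbdd i (θ k i)) (norm_nonneg _)
            (div_nonneg (mul_nonneg (Real.sqrt_nonneg _) (pow_nonneg hlamnn k))
              (mul_nonneg hn0.le hb_pos.le))
      _ = Real.sqrt n * (1 - ρ) ^ k * G / b := by
          rw [Finset.sum_const, Finset.card_univ, Fintype.card_fin, nsmul_eq_mul]
          field_simp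
  -- bound bb
  have hconsk : cons k = ∑ i, ‖θ k i - θhat k‖ ^ 2 := rfl
  have hbb : ‖bb‖ ≤ L / (n : ℝ) * ∑ i, ‖θ k i - θhat k‖ := by
    calc ‖bb‖ ≤ ∑ i, ‖(1 / (n : ℝ)) • (gi i - gradient (f i) (θhat k))‖ := norm_sum_le _ _
      _ ≤ ∑ i, 1 / (n : ℝ) * (L * ‖θ k i - θhat k‖) := by
          apply Finset.sum_le_sum
          intro i _
          rw [norm_smul, Real.norm_eq_abs, abs_of_pos (by positivity)]
          exact mul_le_mul_of_nonneg_left (hLip i (θ k i) (θhat k)) (by positivity)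
      _ = L / (n : ℝ) * ∑ i, ‖θ k i - θhat k‖ := by
          rw [Finset.mul_sum]
          apply Finset.sum_congr rfl
          intro i _
          ring
  have hsumsq : (∑ i, ‖θ k i - θhat k‖) ^ 2 ≤ (n : ℝ) * cons k := by
    rw [hconsk]
    have := sq_sum_le_card_mul_sum_sq
      (s := (Finset.univ : Finset (Fin n))) (f := fun i => ‖θ k i - θhat k‖)
    simpa [Finset.card_univ, Fintype.card_fin] using this
  have hcons_nonneg : 0 ≤ cons k := by
    rw [hconsk]
    exact Finset.sum_nonneg fun i _ => sq_nonneg _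
  have hbb_sq : ‖bb‖ ^ 2 ≤ L ^ 2 / (n : ℝ) * cons k := by
    have h1 : ‖bb‖ ^ 2 ≤ (L / (n : ℝ) * ∑ i, ‖θ k i - θhat k‖) ^ 2 :=
      pow_le_pow_left₀ (norm_nonneg _) hbb 2
    have h2 : (L / (n : ℝ) * ∑ i, ‖θ k i - θhat k‖) ^ 2
        = L ^ 2 / (n : ℝ) ^ 2 * (∑ i, ‖θ k i - θhat k‖) ^ 2 := by ring
    have h3 : L ^ 2 / (n : ℝ) ^ 2 * (∑ i, ‖θ k i - θhat k‖) ^ 2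
        ≤ L ^ 2 / (n : ℝ) ^ 2 * ((n : ℝ) * cons k) :=
      mul_le_mul_of_nonneg_left hsumsq (by positivity)
    have h4 : L ^ 2 / (n : ℝ) ^ 2 * ((n : ℝ) * cons k) = L ^ 2 / (n : ℝ) * cons k := by
      field_simp
    linarith
  -- combine into a bound on ‖e‖²
  have hCk : (Real.sqrt n * (1 - ρ) ^ k * G / b) ^ 2
      = (n : ℝ) * G ^ 2 / b ^ 2 * ((1 - ρ) ^ k) ^ 2 := by
    rw [div_pow, mul_pow, mul_pow, Real.sq_sqrt hn0.le]
    ring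
  have hen_sq : ‖e‖ ^ 2 ≤ 2 * ((n : ℝ) * G ^ 2 / b ^ 2 * ((1 - ρ) ^ k) ^ 2)
      + 2 * (L ^ 2 / (n : ℝ) * cons k) := by
    have h1 : ‖e‖ ≤ ‖aa‖ + ‖bb‖ := by rw [he_ab]; exact norm_add_le _ _
    have h2 : ‖e‖ ^ 2 ≤ (‖aa‖ + ‖bb‖) ^ 2 := pow_le_pow_left₀ (norm_nonneg _) h1 2
    have h3 : ‖aa‖ ^ 2 ≤ (Real.sqrt n * (1 - ρ) ^ k * G / b) ^ 2 :=
      pow_le_pow_left₀ (norm_nonneg _) haa 2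
    rw [hCk] at h3
    have h4 : (‖aa‖ + ‖bb‖) ^ 2 ≤ 2 * ‖aa‖ ^ 2 + 2 * ‖bb‖ ^ 2 := by
      nlinarith only [sq_nonneg (‖aa‖ - ‖bb‖)]
    linarith only [h2, h3, h4, hbb_sq]
  -- final bound on F (θhat (k+1))
  have hFfinal : F (θhat (k+1)) ≤ F (θhat k) - γ k / 4 * ‖D‖ ^ 2
      + 3 * γ k * L ^ 2 / (2 * (n : ℝ)) * cons k
      + 3 / 2 * G ^ 2 * (n : ℝ) / b ^ 2 * γ k * ((1 - ρ) ^ k) ^ 2 := by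
    have h1 : 3 * γ k / 4 * ‖e‖ ^ 2
        ≤ 3 * γ k / 4 * (2 * ((n : ℝ) * G ^ 2 / b ^ 2 * ((1 - ρ) ^ k) ^ 2)
          + 2 * (L ^ 2 / (n : ℝ) * cons k)) :=
      mul_le_mul_of_nonneg_left hen_sq (by linarith [hγpos k])
    have h2 : 3 * γ k / 4 * (2 * ((n : ℝ) * G ^ 2 / b ^ 2 * ((1 - ρ) ^ k) ^ 2)
          + 2 * (L ^ 2 / (n : ℝ) * cons k))
        = 3 / 2 * G ^ 2 * (n : ℝ) / b ^ 2 * γ k * ((1 - ρ) ^ k) ^ 2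
          + 3 * γ k * L ^ 2 / (2 * (n : ℝ)) * cons k := by
      ring
    linarith [hF1]
  -- wrap up
  show F (θhat (k+1)) + (3 * γ (k+1) * L ^ 2 / ((n : ℝ) * ρ)) * cons (k+1)
      ≤ F (θhat k) + (3 * γ k * L ^ 2 / ((n : ℝ) * ρ)) * cons k
        - (γ k / 4) * ‖gradient F (θhat k)‖ ^ 2
        - (3 * γ k * L ^ 2 * (2 - ρ) / (2 * (n : ℝ) * ρ)) * cons k
        + (3 * γ (k+1) * L ^ 2 / ((n : ℝ) * ρ)) * cons (k+1)
        + 3 / 2 * G ^ 2 * (n : ℝ) / b ^ 2 * γ k * (1 - ρ) ^ (2 * k)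
  have hlam2 : (1 - ρ) ^ (2 * k) = ((1 - ρ) ^ k) ^ 2 := by
    rw [mul_comm, pow_mul]
  rw [hlam2]
  have hbr : (3 * γ k * L ^ 2 / ((n : ℝ) * ρ)) * cons k
      - (3 * γ k * L ^ 2 * (2 - ρ) / (2 * (n : ℝ) * ρ)) * cons k
      = 3 * γ k * L ^ 2 / (2 * (n : ℝ)) * cons k := by
    field_simp
    ring
  linarith only [hFfinal, hbr]
end
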